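/- Distinguishing Theorem: for games G₁^{g₁},...,Gₘ^{gₘ}, H₁^{h₁},...,Hₙ^{hₙ} with activeness, there exists an active game X^1 with o(Gᵢ^{gᵢ}+X^1)=𝒫 for all i∈[m] and o(Hⱼ^{hⱼ}+X^1)=𝒩 for all j∈[n] if and only if (b1) Gᵢ^{gᵢ} ⋈ Gⱼ^{gⱼ} for all i,j∈[m], and (b2) Gᵢ^{gᵢ} ≠ Hⱼ^{hⱼ} for all i∈[m], j∈[n]. -/

import Mathlib

inductive AGame : Type where
  | mk : List AGame → Bool → AGame

namespace AGame

noncomputable instance : DecidableEq AGame := Classical.decEq _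

def opts : AGame → List AGame | mk gs _ => gs
def act : AGame → Bool | mk _ g => g

theorem sizeOf_lt_of_mem {G G' : AGame} (h : G' ∈ G.opts) : sizeOf G' < sizeOf G := by
  cases G with
  | mk gs g =>
    simp only [opts] at h
    have := List.sizeOf_lt_of_mem h
    simp [AGame.mk.sizeOf_spec]
    omega

/-- Disjunctive sum of games with activeness. -/
def add (G H : AGame) : AGame :=
  mk (G.opts.attach.map (fun x => add x.1 H) ++
      H.opts.attach.map (fun y => add G y.1)) (G.act || H.act)
termination_by sizeOf G + sizeOf H
decreasing_by
  · have := sizeOf_lt_of_mem x.2; omega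
  · have := sizeOf_lt_of_mem y.2; omega

/-- `PPos G` means the outcome of `G` is 𝒫 (second player wins). -/
def PPos (G : AGame) : Prop :=
  G.act = false ∨ ∀ G' ∈ G.opts.attach, ¬ PPos G'.1
termination_by sizeOf G
decreasing_by
  have := sizeOf_lt_of_mem G'.2; omega

/-- Hereditary set-equality (the paper's ≅). -/
def Identical (G H : AGame) : Prop :=
  G.act = H.act ∧ (∀ G' ∈ G.opts.attach, ∃ H' ∈ H.opts.attach, Identical G'.1 H'.1)
              ∧ (∀ H' ∈ H.opts.attach, ∃ G' ∈ G.opts.attach, Identical G'.1 H'.1)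
termination_by sizeOf G + sizeOf H
decreasing_by
  · have := sizeOf_lt_of_mem G'.2; have := sizeOf_lt_of_mem H'.2; omega
  · have := sizeOf_lt_of_mem G'.2; have := sizeOf_lt_of_mem H'.2; omega

/-- Equivalence of games with activeness: same outcome in every sum. -/
def Equiv (G H : AGame) : Prop := ∀ X : AGame, (PPos (add G X) ↔ PPos (add H X))

end AGame

namespace AGame

/-- Nimbers with activeness: `star γ n ≅ {star γ j : j < n}^{γ n}`. -/
def star (γ : ℕ → Bool) : ℕ → AGame
  | n => mk ((List.range n).attach.map (fun j => star γ j.1)) (γ n)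
termination_by n => n
decreasing_by
  have := j.2; simp [List.mem_range] at this; omega

/-- The generalized Grundy set `𝒢^γ(G)`. -/
def GSet (γ : ℕ → Bool) (G : AGame) : Set ℕ := {n | PPos (add G (star γ n))}

/-- Minimum excludant of a set of naturals. -/
noncomputable def mex (S : Set ℕ) : ℕ := sInf {n | n ∉ S}

/-- Ordinary Grundy value, computed ignoring activeness. -/
noncomputable def grundy (G : AGame) : ℕ :=
  mex {m | ∃ G' ∈ G.opts.attach, grundy G'.1 = m}
termination_by sizeOf G
decreasing_by
  have := sizeOf_lt_of_mem G'.2; omega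

/-- The three types of games with activeness. -/
inductive AType : Type where
  | inactive : AType            -- type 0
  | activeSomeInactive : AType  -- type 1_{∃0}
  | activeAllActive : AType     -- type 1_{∀1}

open Classical in
/-- `type(G^g)`. -/
noncomputable def typ (G : AGame) : AType :=
  if G.act = false then .inactive
  else if ∃ G' ∈ G.opts, G'.act = false then .activeSomeInactive
  else .activeAllActive

/-- Formal birthday `b(G)`. -/
def bday (G : AGame) : ℕ :=
  (G.opts.attach.map (fun G' => bday G'.1 + 1)).foldr max 0
termination_by sizeOf G
decreasing_by
  have := sizeOf_lt_of_mem G'.2; omega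

/-- An option `G'` of `G` is reversible if it has an option equivalent to `G`. -/
def Reversible (G G' : AGame) : Prop := ∃ G'' ∈ G'.opts, Equiv G'' G

/-- A canonical game: all options canonical and no option reversible. -/
def Canonical (G : AGame) : Prop :=
  (∀ G' ∈ G.opts.attach, Canonical G'.1) ∧ (∀ G' ∈ G.opts, ¬ Reversible G G')
termination_by sizeOf G
decreasing_by
  have := sizeOf_lt_of_mem G'.2; omega

/-- A transitive game: all options transitive and options of options are options. -/
def TransGame (G : AGame) : Prop :=
  (∀ G' ∈ G.opts.attach, TransGame G'.1) ∧ (∀ G' ∈ G.opts, ∀ G'' ∈ G'.opts, G'' ∈ G.opts)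
termination_by sizeOf G
decreasing_by
  have := sizeOf_lt_of_mem G'.2; omega

/-- `G` is covered by `H` if every option of `G` is equivalent to some option of `H`. -/
def Covered (G H : AGame) : Prop := ∀ G' ∈ G.opts, ∃ H' ∈ H.opts, Equiv G' H'

/-- The relation `G ⋈ H`. -/
def Bowtie (G H : AGame) : Prop :=
  (∀ G' ∈ G.opts, ¬ Equiv G' H) ∧ (∀ H' ∈ H.opts, ¬ Equiv G H')

/-- The linear chain `∅^{g₀ g₁ … gₙ}`. -/
def chain (g : ℕ → Bool) : ℕ → AGame
  | 0 => mk [] (g 0)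
  | n + 1 => mk [chain g n] (g (n + 1))

end AGame

namespace AGame

def e : AGame := mk [] true

lemma opts_mk (l : List AGame) (b : Bool) : (mk l b).opts = l := rfl
lemma act_mk (l : List AGame) (b : Bool) : (mk l b).act = b := rfl

lemma add_def (A B : AGame) : add A B =
    mk (A.opts.attach.map (fun x => add x.1 B) ++
        B.opts.attach.map (fun y => add A y.1)) (A.act || B.act) := by
  rw [add]

lemma act_add (A B : AGame) : (add A B).act = (A.act || B.act) := by
  rw [add_def]; rfl

lemma opts_add (A B : AGame) : (add A B).opts =
    A.opts.attach.map (fun x => add x.1 B) ++ B.opts.attach.map (fun y => add A y.1) := by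
  rw [add_def]; rfl

lemma mem_opts_add_left {A' : AGame} {A B : AGame} (h : A' ∈ A.opts) :
    add A' B ∈ (add A B).opts := by
  rw [opts_add]
  exact List.mem_append_left _ (List.mem_map.2 ⟨⟨A', h⟩, List.mem_attach _ _, rfl⟩)

lemma mem_opts_add_right {B' : AGame} {A B : AGame} (h : B' ∈ B.opts) :
    add A B' ∈ (add A B).opts := by
  rw [opts_add]
  exact List.mem_append_right _ (List.mem_map.2 ⟨⟨B', h⟩, List.mem_attach _ _, rfl⟩)

lemma mem_opts_add_iff {Z A B : AGame} : Z ∈ (add A B).opts ↔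
    (∃ A' ∈ A.opts, Z = add A' B) ∨ (∃ B' ∈ B.opts, Z = add A B') := by
  rw [opts_add]
  constructor
  · intro h
    rcases List.mem_append.1 h with h | h
    · rcases List.mem_map.1 h with ⟨⟨A', hA'⟩, _, rfl⟩
      exact Or.inl ⟨A', hA', rfl⟩
    · rcases List.mem_map.1 h with ⟨⟨B', hB'⟩, _, rfl⟩
      exact Or.inr ⟨B', hB', rfl⟩
  · rintro (⟨A', hA', rfl⟩ | ⟨B', hB', rfl⟩)
    · exact List.mem_append_left _ (List.mem_map.2 ⟨⟨A', hA'⟩, List.mem_attach _ _, rfl⟩)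
    · exact List.mem_append_right _ (List.mem_map.2 ⟨⟨B', hB'⟩, List.mem_attach _ _, rfl⟩)

lemma PPos_iff (G : AGame) : PPos G ↔ (G.act = false ∨ ∀ G' ∈ G.opts, ¬ PPos G') := by
  rw [PPos]
  simp [List.mem_attach]

end AGame
namespace AGame

lemma PPos_of_act_false {G : AGame} (h : G.act = false) : PPos G :=
  (PPos_iff G).2 (Or.inl h)

lemma PPos_iff_of_act {G : AGame} (h : G.act = true) :
    PPos G ↔ ∀ G' ∈ G.opts, ¬ PPos G' := by
  rw [PPos_iff]
  simp [h]

lemma not_PPos_iff {G : AGame} : ¬ PPos G ↔ G.act = true ∧ ∃ G' ∈ G.opts, PPos G' := by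
  rw [PPos_iff]
  push_neg
  simp [Bool.not_eq_false]

lemma strongInd {motive : AGame → Prop}
    (ind : ∀ G, (∀ G', sizeOf G' < sizeOf G → motive G') → motive G) : ∀ G, motive G := by
  have h : ∀ nn G, sizeOf G < nn → motive G := by
    intro nn
    induction nn with
    | zero => intro G h; omega
    | succ k ih => intro G h; exact ind G (fun G' h' => ih G' (by omega))
  exact fun G => h (sizeOf G + 1) G (by omega)

lemma mirror : ∀ A : AGame, PPos (add A (add A e)) := by
  apply strongInd
  intro A ih
  have hact : (add A (add A e)).act = true := by simp [act_add, e, act_mk]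
  rw [PPos_iff_of_act hact]
  intro Z hZ
  rcases mem_opts_add_iff.1 hZ with ⟨A', hA', rfl⟩ | ⟨B', hB', rfl⟩
  · rw [not_PPos_iff]
    refine ⟨by simp [act_add, e, act_mk], add A' (add A' e), ?_, ih A' (sizeOf_lt_of_mem hA')⟩
    exact mem_opts_add_right (mem_opts_add_left hA')
  · rcases mem_opts_add_iff.1 hB' with ⟨A', hA', rfl⟩ | ⟨B'', hB'', rfl⟩
    · rw [not_PPos_iff]
      refine ⟨by simp [act_add, e, act_mk], add A' (add A' e), ?_, ih A' (sizeOf_lt_of_mem hA')⟩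
      exact mem_opts_add_left hA'
    · exact absurd hB'' (by simp [e, opts_mk])

/-- For each option `C'` of `C`, there is an `M` with `C'+M` a P-position
and `C+M` an N-position. -/
lemma optDist : ∀ C : AGame, ∀ C' ∈ C.opts,
    ∃ M : AGame, M.act = true ∧ PPos (add C' M) ∧ ¬ PPos (add C M) := by
  apply strongInd
  intro C ih C' hC'
  have ihC' := ih C' (sizeOf_lt_of_mem hC')
  classical
  refine ⟨mk (add C e :: C'.opts.attach.map
      (fun x => Classical.choose (ihC' x.1 x.2))) true, rfl, ?_, ?_⟩
  · -- PPos (add C' M)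
    have hact : (add C' (mk (add C e :: C'.opts.attach.map
        (fun x => Classical.choose (ihC' x.1 x.2))) true)).act = true := by
      simp [act_add, act_mk]
    rw [PPos_iff_of_act hact]
    intro Z hZ
    rcases mem_opts_add_iff.1 hZ with ⟨C'', hC'', rfl⟩ | ⟨Y, hY, rfl⟩
    · -- Z = add C'' M : N via option add C'' M_{C''}
      rw [not_PPos_iff]
      refine ⟨by simp [act_add, act_mk], add C'' (Classical.choose (ihC' C'' hC'')), ?_, ?_⟩
      · apply mem_opts_add_right
        rw [opts_mk]
        exact List.mem_cons_of_mem _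
          (List.mem_map.2 ⟨⟨C'', hC''⟩, List.mem_attach _ _, rfl⟩)
      · exact (Classical.choose_spec (ihC' C'' hC'')).2.1
    · rw [opts_mk] at hY
      rcases List.mem_cons.1 hY with rfl | hY
      · -- Z = add C' (add C e): an option of the P-position add C (add C e)
        have hP := mirror C
        have hact2 : (add C (add C e)).act = true := by simp [act_add, e, act_mk]
        exact (PPos_iff_of_act hact2).1 hP _ (mem_opts_add_left hC')
      · rcases List.mem_map.1 hY with ⟨⟨C'', hC''⟩, _, rfl⟩
        exact (Classical.choose_spec (ihC' C'' hC'')).2.2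
  · -- ¬ PPos (add C M)
    rw [not_PPos_iff]
    refine ⟨by simp [act_add, act_mk], add C (add C e), ?_, mirror C⟩
    apply mem_opts_add_right
    rw [opts_mk]
    exact List.mem_cons_self

end AGame
namespace AGame

/-- Given a witness `W` of the right polarity, upgrade it to an active distinguisher. -/
lemma distOfWitness (A B W : AGame) (h1 : ¬ PPos (add A W)) (h2 : PPos (add B W)) :
    ∃ X : AGame, X.act = true ∧ PPos (add A X) ∧ ¬ PPos (add B X) := by
  classical
  refine ⟨mk (W :: A.opts.attach.map
      (fun a => Classical.choose (optDist A a.1 a.2))) true, rfl, ?_, ?_⟩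
  · have hact : (add A (mk (W :: A.opts.attach.map
        (fun a => Classical.choose (optDist A a.1 a.2))) true)).act = true := by
      simp [act_add, act_mk]
    rw [PPos_iff_of_act hact]
    intro Z hZ
    rcases mem_opts_add_iff.1 hZ with ⟨A', hA', rfl⟩ | ⟨Y, hY, rfl⟩
    · rw [not_PPos_iff]
      refine ⟨by simp [act_add, act_mk], add A' (Classical.choose (optDist A A' hA')), ?_, ?_⟩
      · apply mem_opts_add_right
        rw [opts_mk]
        exact List.mem_cons_of_mem _
          (List.mem_map.2 ⟨⟨A', hA'⟩, List.mem_attach _ _, rfl⟩)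
      · exact (Classical.choose_spec (optDist A A' hA')).2.1
    · rw [opts_mk] at hY
      rcases List.mem_cons.1 hY with rfl | hY
      · exact h1
      · rcases List.mem_map.1 hY with ⟨⟨A', hA'⟩, _, rfl⟩
        exact (Classical.choose_spec (optDist A A' hA')).2.2
  · rw [not_PPos_iff]
    refine ⟨by simp [act_add, act_mk], add B W, ?_, h2⟩
    apply mem_opts_add_right
    rw [opts_mk]
    exact List.mem_cons_self

lemma equiv_symm {A B : AGame} (h : Equiv A B) : Equiv B A := fun X => (h X).symm

lemma pairDist (A B : AGame) (h : ¬ Equiv A B) :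
    ∃ X : AGame, X.act = true ∧ PPos (add A X) ∧ ¬ PPos (add B X) := by
  rw [Equiv] at h
  push_neg at h
  obtain ⟨W, hW⟩ := h
  rcases hW with ⟨h1, h2⟩ | ⟨h1, h2⟩
  · obtain ⟨X₁, hX₁act, hX₁B, hX₁A⟩ := distOfWitness B A W h2 h1
    exact distOfWitness A B X₁ hX₁A hX₁B
  · exact distOfWitness A B W h1 h2

lemma multiDist (Z : AGame) (m : ℕ) (Gs : Fin m → AGame) (h : ∀ k, ¬ Equiv Z (Gs k)) :
    ∃ M : AGame, M.act = true ∧ PPos (add Z M) ∧ ∀ k, ¬ PPos (add (Gs k) M) := by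
  classical
  have hpair : ∀ k, ∃ X : AGame, X.act = true ∧ PPos (add (Gs k) X) ∧ ¬ PPos (add Z X) :=
    fun k => pairDist (Gs k) Z (fun hEq => h k (equiv_symm hEq))
  set L : List AGame := (List.ofFn fun k => Classical.choose (hpair k)) ++
      Z.opts.attach.map (fun z => Classical.choose (optDist Z z.1 z.2)) with hL
  refine ⟨mk L true, rfl, ?_, ?_⟩
  · have hact : (add Z (mk L true)).act = true := by simp [act_add, act_mk]
    rw [PPos_iff_of_act hact]
    intro Y hY
    rcases mem_opts_add_iff.1 hY with ⟨Z', hZ', rfl⟩ | ⟨Y', hY', rfl⟩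
    · rw [not_PPos_iff]
      refine ⟨by simp [act_add, act_mk], add Z' (Classical.choose (optDist Z Z' hZ')), ?_, ?_⟩
      · apply mem_opts_add_right
        rw [opts_mk, hL]
        exact List.mem_append_right _
          (List.mem_map.2 ⟨⟨Z', hZ'⟩, List.mem_attach _ _, rfl⟩)
      · exact (Classical.choose_spec (optDist Z Z' hZ')).2.1
    · rw [opts_mk, hL] at hY'
      rcases List.mem_append.1 hY' with hY' | hY'
      · rcases List.mem_ofFn.1 hY' with ⟨k, rfl⟩
        exact (Classical.choose_spec (hpair k)).2.2
      · rcases List.mem_map.1 hY' with ⟨⟨Z', hZ'⟩, _, rfl⟩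
        exact (Classical.choose_spec (optDist Z Z' hZ')).2.2
  · intro k
    rw [not_PPos_iff]
    refine ⟨by simp [act_add, act_mk], add (Gs k) (Classical.choose (hpair k)), ?_,
      (Classical.choose_spec (hpair k)).2.1⟩
    apply mem_opts_add_right
    rw [opts_mk, hL]
    exact List.mem_append_left _ (List.mem_ofFn.2 ⟨k, rfl⟩)

end AGame
/-- Distinguishing Theorem. -/
theorem AGame.distinguishing (m n : ℕ) (Gs : Fin m → AGame) (Hs : Fin n → AGame) :
    (∃ X : AGame, X.act = true ∧ (∀ i, AGame.PPos (AGame.add (Gs i) X)) ∧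
        (∀ j, ¬ AGame.PPos (AGame.add (Hs j) X)))
    ↔ ((∀ i j, AGame.Bowtie (Gs i) (Gs j)) ∧ (∀ i j, ¬ AGame.Equiv (Gs i) (Hs j))) := by
  classical
  constructor
  · rintro ⟨X, hXact, hG, hH⟩
    have hopt : ∀ i, ∀ Z ∈ (Gs i).opts, ¬ PPos (add Z X) := by
      intro i Z hZ
      have hact : (add (Gs i) X).act = true := by simp [act_add, hXact]
      exact (PPos_iff_of_act hact).1 (hG i) _ (mem_opts_add_left hZ)
    refine ⟨fun i j => ⟨?_, ?_⟩, fun i j hEq => hH j ((hEq X).1 (hG i))⟩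
    · intro G' hG' hEq
      exact hopt i G' hG' ((hEq X).2 (hG j))
    · intro H' hH' hEq
      exact hopt j H' hH' ((hEq X).1 (hG i))
  · rintro ⟨b1, b2⟩
    set D : List AGame := ((List.finRange m).flatMap (fun i => (Gs i).opts)) ++
        (List.finRange n).map Hs with hD
    have hDspec : ∀ Z ∈ D, ∀ k, ¬ Equiv Z (Gs k) := by
      intro Z hZ k
      rw [hD] at hZ
      rcases List.mem_append.1 hZ with hZ | hZ
      · rcases List.mem_flatMap.1 hZ with ⟨i, _, hZi⟩
        exact (b1 i k).1 Z hZi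
      · rcases List.mem_map.1 hZ with ⟨j, _, rfl⟩
        exact fun hEq => b2 k j (equiv_symm hEq)
    have hmulti : ∀ z : {z // z ∈ D}, ∃ M : AGame, M.act = true ∧
        PPos (add z.1 M) ∧ ∀ k, ¬ PPos (add (Gs k) M) :=
      fun z => multiDist z.1 m Gs (hDspec z.1 z.2)
    set X : AGame := mk (D.attach.map (fun z => Classical.choose (hmulti z))) true with hX
    have hXopts : ∀ Z (hZ : Z ∈ D),
        Classical.choose (hmulti ⟨Z, hZ⟩) ∈ X.opts := by
      intro Z hZ
      rw [hX, opts_mk]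
      exact List.mem_map.2 ⟨⟨Z, hZ⟩, List.mem_attach _ _, rfl⟩
    have hXmem : ∀ Y ∈ X.opts, ∃ z : {z // z ∈ D}, Y = Classical.choose (hmulti z) := by
      intro Y hY
      rw [hX, opts_mk] at hY
      rcases List.mem_map.1 hY with ⟨z, _, rfl⟩
      exact ⟨z, rfl⟩
    refine ⟨X, rfl, ?_, ?_⟩
    · intro i
      have hact : (add (Gs i) X).act = true := by simp [hX, act_add, act_mk]
      rw [PPos_iff_of_act hact]
      intro Z hZ
      rcases mem_opts_add_iff.1 hZ with ⟨G', hG', rfl⟩ | ⟨Y, hY, rfl⟩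
      · have hG'D : G' ∈ D := by
          rw [hD]
          exact List.mem_append_left _
            (List.mem_flatMap.2 ⟨i, List.mem_finRange i, hG'⟩)
        rw [not_PPos_iff]
        refine ⟨by simp [hX, act_add, act_mk], add G' (Classical.choose (hmulti ⟨G', hG'D⟩)),
          mem_opts_add_right (hXopts G' hG'D),
          (Classical.choose_spec (hmulti ⟨G', hG'D⟩)).2.1⟩
      · rcases hXmem Y hY with ⟨z, rfl⟩
        exact (Classical.choose_spec (hmulti z)).2.2 i
    · intro j
      have hHD : Hs j ∈ D := by
        rw [hD]
        exact List.mem_append_right _ (List.mem_map.2 ⟨j, List.mem_finRange j, rfl⟩)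
      rw [not_PPos_iff]
      exact ⟨by simp [hX, act_add, act_mk], add (Hs j) (Classical.choose (hmulti ⟨Hs j, hHD⟩)),
        mem_opts_add_right (hXopts (Hs j) hHD),
        (Classical.choose_spec (hmulti ⟨Hs j, hHD⟩)).2.1⟩
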